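/- Let S be a real symmetric positive definite n×n matrix that is tridiagonal (S(i,j) = 0 whenever |i − j| > 1), and let η and η̃ be independent random vectors each distributed as the centered multivariate Gaussian N(0, S⁻¹) on ℝⁿ. Define X_k := ½(η_k² + η̃_k²) for k = 0,…,n−1. Then for every 1 ≤ k ≤ n−1 and every t ≥ 0, E[exp(−tX_k) | σ(X₀,…,X_{k−1})] = E[exp(−tX_k) | σ(X_{k−1})] almost surely. In particular the sequence (X₀,…,X_{n−1}) is a Markov chain. -/

import Mathlib

open MeasureTheory ProbabilityTheory Matrix

/-- The centered multivariate Gaussian measure on `ℝⁿ` with (positive definite)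
covariance matrix `S`, defined via its density with respect to Lebesgue measure. -/
noncomputable def multivariateGaussian {n : ℕ} (S : Matrix (Fin n) (Fin n) ℝ) :
    Measure (Fin n → ℝ) :=
  volume.withDensity fun x =>
    ENNReal.ofReal ((Real.sqrt ((2 * Real.pi) ^ n * S.det))⁻¹ *
      Real.exp (-(x ⬝ᵥ S⁻¹.mulVec x) / 2))

open Real

namespace SqGauss
variable {m : ℕ}

noncomputable def qf {m : ℕ} (T : Matrix (Fin m) (Fin m) ℝ) (x : Fin m → ℝ) : ℝ :=
  x ⬝ᵥ T.mulVec x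

noncomputable def prune {m : ℕ} (T : Matrix (Fin (m+1)) (Fin (m+1)) ℝ) :
    Matrix (Fin m) (Fin m) ℝ :=
  fun i j => T i.castSucc j.castSucc -
    T i.castSucc (Fin.last m) * T (Fin.last m) j.castSucc / T (Fin.last m) (Fin.last m)

lemma symm_apply {T : Matrix (Fin m) (Fin m) ℝ} (hT : T.IsHermitian) (i j : Fin m) :
    T j i = T i j := by
  simpa using hT.apply i j

lemma qf_snoc {T : Matrix (Fin (m+1)) (Fin (m+1)) ℝ} (hsym : T.IsHermitian)
    (hd : T (Fin.last m) (Fin.last m) ≠ 0) (u : Fin m → ℝ) (s : ℝ) :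
    qf T (Fin.snoc u s) = qf (prune T) u +
      T (Fin.last m) (Fin.last m) *
        (s + (∑ i, T i.castSucc (Fin.last m) * u i) / T (Fin.last m) (Fin.last m))^2 := by
  have hb : ∀ j : Fin m, T (Fin.last m) j.castSucc = T j.castSucc (Fin.last m) :=
    fun j => symm_apply hsym _ _
  simp only [qf, prune, dotProduct, mulVec, Fin.sum_univ_castSucc, Fin.snoc_castSucc,
    Fin.snoc_last]
  simp only [hb]
  set d := T (Fin.last m) (Fin.last m) with hdd
  set b := ∑ i, T i.castSucc (Fin.last m) * u i with hbb
  set Q0 := ∑ i, u i * ∑ j, T i.castSucc j.castSucc * u j with hQ0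
  have e1 : ∑ i, u i * (∑ j, T i.castSucc j.castSucc * u j + T i.castSucc (Fin.last m) * s)
      = Q0 + b * s := by
    rw [hQ0, hbb, Finset.sum_mul, ← Finset.sum_add_distrib]
    refine Finset.sum_congr rfl fun i _ => by ring
  have e2 : ∑ i, u i * ∑ j,
        (T i.castSucc j.castSucc - T i.castSucc (Fin.last m) * T j.castSucc (Fin.last m) / d) * u j
      = Q0 - b * (b / d) := by
    have hb2 : b * (b / d) = ∑ i, (T i.castSucc (Fin.last m) * u i) * (b / d) := by
      rw [hbb, Finset.sum_mul]
    rw [hQ0, hb2, ← Finset.sum_sub_distrib]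
    refine Finset.sum_congr rfl fun i _ => ?_
    rw [hbb, Finset.mul_sum, Finset.mul_sum, Finset.sum_div, Finset.mul_sum,
      ← Finset.sum_sub_distrib]
    refine Finset.sum_congr rfl fun j _ => ?_
    field_simp
  rw [e1, e2]
  field_simp
  ring

end SqGauss

namespace SqGauss
variable {m : ℕ}

lemma posDef_diag {T : Matrix (Fin m) (Fin m) ℝ} (hT : T.PosDef) (i : Fin m) :
    0 < T i i := by
  have := hT.dotProduct_mulVec_pos (x := Pi.single i 1) (by
    intro h
    have := congrFun h i
    simp at this)
  simpa [dotProduct, mulVec, Pi.single_apply, Finset.sum_ite_eq, Finset.mul_sum] using this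

lemma prune_isHermitian {T : Matrix (Fin (m+1)) (Fin (m+1)) ℝ} (hT : T.IsHermitian) :
    (prune T).IsHermitian := by
  ext i j
  simp only [prune, conjTranspose_apply, star_trivial, transpose_apply]
  rw [symm_apply hT j.castSucc i.castSucc, symm_apply hT j.castSucc (Fin.last m),
    symm_apply hT (Fin.last m) i.castSucc]
  ring

lemma qf_pos {T : Matrix (Fin m) (Fin m) ℝ} (hT : T.PosDef) {x : Fin m → ℝ} (hx : x ≠ 0) :
    0 < qf T x := by
  have := hT.dotProduct_mulVec_pos hx
  simpa [qf] using this

lemma prune_posDef {T : Matrix (Fin (m+1)) (Fin (m+1)) ℝ} (hT : T.PosDef) :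
    (prune T).PosDef := by
  have hd : T (Fin.last m) (Fin.last m) ≠ 0 := (posDef_diag hT _).ne'
  refine PosDef.of_dotProduct_mulVec_pos (prune_isHermitian hT.1) fun u hu => ?_
  have hsnoc : (Fin.snoc u (-((∑ i, T i.castSucc (Fin.last m) * u i) /
      T (Fin.last m) (Fin.last m))) : Fin (m+1) → ℝ) ≠ 0 := by
    intro h
    apply hu
    ext i
    have := congrFun h i.castSucc
    simpa [Fin.snoc_castSucc] using this
  have h2 := qf_pos hT hsnoc
  rw [qf_snoc hT.1 hd] at h2
  simp only [neg_add_cancel, ne_eq] at h2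
  norm_num at h2
  simpa [qf] using h2

lemma prune_tridiag {T : Matrix (Fin (m+1)) (Fin (m+1)) ℝ}
    (htri : ∀ i j : Fin (m+1), ((i:ℕ)+1 < (j:ℕ) ∨ (j:ℕ)+1 < (i:ℕ)) → T i j = 0) :
    ∀ i j : Fin m, ((i:ℕ)+1 < (j:ℕ) ∨ (j:ℕ)+1 < (i:ℕ)) → prune T i j = 0 := by
  intro i j hij
  have h1 : T i.castSucc j.castSucc = 0 := htri _ _ (by simpa using hij)
  have h2 : T i.castSucc (Fin.last m) * T (Fin.last m) j.castSucc = 0 := by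
    rcases hij with h | h
    · have : (j:ℕ) < m := j.isLt
      have : T i.castSucc (Fin.last m) = 0 ∨ T (Fin.last m) j.castSucc = 0 := by
        by_cases hi : (i:ℕ)+1 < m
        · exact Or.inl (htri _ _ (Or.inl (by simpa using hi)))
        · right
          apply htri
          right
          simp only [Fin.val_last, Fin.coe_castSucc]
          omega
      rcases this with h | h <;> simp [h]
    · refine mul_eq_zero.mpr (Or.inr ?_)
      apply htri
      right
      simp only [Fin.val_last, Fin.coe_castSucc]
      omega
  simp [prune, h1, h2]

end SqGauss

namespace SqGauss

lemma lintegral_gauss1 {d : ℝ} (hd : 0 < d) (c a : ℝ) :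
    ∫⁻ s : ℝ, ENNReal.ofReal (Real.exp (-(c + d*(s+a)^2)/2))
      = ENNReal.ofReal (Real.exp (-c/2) * Real.sqrt (2*Real.pi/d)) := by
  have hfi : Integrable (fun s : ℝ => Real.exp (-(d/2) * (s+a)^2)) := by
    have := (integrable_exp_neg_mul_sq (show 0 < d/2 by linarith)).comp_add_right a
    simpa using this
  have hpt : ∀ s : ℝ, Real.exp (-(c + d*(s+a)^2)/2)
      = Real.exp (-c/2) * Real.exp (-(d/2) * (s+a)^2) := by
    intro s
    rw [← Real.exp_add]
    ring_nf
  simp only [hpt]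
  have h1 : ∀ s : ℝ, ENNReal.ofReal (Real.exp (-c/2) * Real.exp (-(d/2) * (s+a)^2))
      = ENNReal.ofReal (Real.exp (-c/2)) * ENNReal.ofReal (Real.exp (-(d/2) * (s+a)^2)) :=
    fun s => ENNReal.ofReal_mul (Real.exp_nonneg _)
  simp only [h1]
  rw [lintegral_const_mul _ (by fun_prop)]
  rw [← ofReal_integral_eq_lintegral_ofReal hfi (.of_forall fun s => Real.exp_nonneg _)]
  rw [show (∫ s : ℝ, Real.exp (-(d/2) * (s+a)^2)) = ∫ s : ℝ, Real.exp (-(d/2) * s^2) from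
    integral_add_right_eq_self (fun s => Real.exp (-(d/2) * s^2)) a]
  rw [integral_gaussian]
  rw [← ENNReal.ofReal_mul (Real.exp_nonneg _)]
  congr 2
  rw [div_div_eq_mul_div]
  ring_nf

end SqGauss

namespace SqGauss
variable {m : ℕ}

lemma measurable_qf (T : Matrix (Fin m) (Fin m) ℝ) : Measurable (fun x => qf T x) := by
  unfold qf dotProduct mulVec
  exact Finset.measurable_sum _ fun i _ => by
    exact ((measurable_pi_apply i).mul (Finset.measurable_sum _ fun j _ =>
      (measurable_const.mul (measurable_pi_apply j))))

lemma step_lintegral (T : Matrix (Fin (m+1)) (Fin (m+1)) ℝ) (hT : T.PosDef)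
    (h : (Fin m → ℝ) → ENNReal) (hh : Measurable h) :
    ∫⁻ x : Fin (m+1) → ℝ, h (fun i => x i.castSucc) * ENNReal.ofReal (Real.exp (-(qf T x)/2))
      = ENNReal.ofReal (Real.sqrt (2*Real.pi / T (Fin.last m) (Fin.last m))) *
        ∫⁻ u : Fin m → ℝ, h u * ENNReal.ofReal (Real.exp (-(qf (prune T) u)/2)) := by
  have hd : 0 < T (Fin.last m) (Fin.last m) := posDef_diag hT _
  set d := T (Fin.last m) (Fin.last m) with hdd
  set e := MeasurableEquiv.piFinSuccAbove (fun _ : Fin (m+1) => ℝ) (Fin.last m)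
  have mp := (volume_preserving_piFinSuccAbove (fun _ : Fin (m+1) => ℝ) (Fin.last m)).symm
  set F : (Fin (m+1) → ℝ) → ENNReal :=
    fun x => h (fun i => x i.castSucc) * ENNReal.ofReal (Real.exp (-(qf T x)/2)) with hF
  have hFmeas : Measurable F := by
    apply Measurable.mul
    · exact hh.comp (measurable_pi_lambda _ fun i => measurable_pi_apply _)
    · exact ENNReal.measurable_ofReal.comp (Real.measurable_exp.comp
        ((measurable_qf T).neg.div_const 2))
  calc ∫⁻ x, F x = ∫⁻ z : ℝ × (Fin m → ℝ), F (e.symm z) := (mp.lintegral_comp hFmeas).symm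
    _ = ∫⁻ u : Fin m → ℝ, ∫⁻ s : ℝ, F (e.symm (s, u)) := by
        rw [Measure.volume_eq_prod]
        exact lintegral_prod_symm _ (hFmeas.comp e.symm.measurable).aemeasurable
    _ = ∫⁻ u : Fin m → ℝ, (h u * ENNReal.ofReal (Real.exp (-(qf (prune T) u)/2))) *
          ENNReal.ofReal (Real.sqrt (2*Real.pi/d)) := by
        refine lintegral_congr fun u => ?_
        have hesymm : ∀ s : ℝ, (e.symm (s, u) : Fin (m+1) → ℝ) = Fin.snoc u s := by
          intro s
          simp [e, MeasurableEquiv.piFinSuccAbove_symm_apply, Fin.insertNth_last,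
            Fin.snocEquiv, Fin.snoc_castSucc]
        have hFs : ∀ s : ℝ, F (e.symm (s, u)) = h u * ENNReal.ofReal
            (Real.exp (-(qf (prune T) u + d * (s + (∑ i, T i.castSucc (Fin.last m) * u i) / d)^2)/2)) := by
          intro s
          rw [hF]
          simp only [hesymm s]
          have hcoord : (fun i : Fin m => (Fin.snoc u s : Fin (m+1) → ℝ) i.castSucc) = u := by
            funext i; simp
          rw [hcoord, qf_snoc hT.1 hd.ne' u s]
        simp only [hFs]
        rw [lintegral_const_mul _ (by fun_prop), lintegral_gauss1 hd,
          ENNReal.ofReal_mul (Real.exp_nonneg _), mul_assoc]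
    _ = ENNReal.ofReal (Real.sqrt (2*Real.pi / d)) *
        ∫⁻ u : Fin m → ℝ, h u * ENNReal.ofReal (Real.exp (-(qf (prune T) u)/2)) := by
        have hmeas2 : Measurable fun u => ENNReal.ofReal (Real.exp (-qf (prune T) u / 2)) :=
          ENNReal.measurable_ofReal.comp (Real.measurable_exp.comp
            ((measurable_qf (prune T)).neg.div_const 2))
        rw [lintegral_mul_const _ (show Measurable fun u => h u * ENNReal.ofReal (Real.exp (-qf (prune T) u / 2)) from hh.mul hmeas2), mul_comm]

end SqGauss

namespace SqGauss
variable {m : ℕ}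

lemma qf_add_single (M : Matrix (Fin m) (Fin m) ℝ) (p : Fin m) (c : ℝ) (x : Fin m → ℝ) :
    qf (M + Matrix.single p p c) x = qf M x + c * (x p)^2 := by
  simp only [qf, dotProduct, mulVec, Matrix.add_apply, add_mul, Finset.sum_add_distrib, mul_add]
  congr 1
  have h1 : ∀ i : Fin m, ∑ j, Matrix.single p p c i j * x j
      = if p = i then c * x p else 0 := by
    intro i
    simp only [Matrix.single, Matrix.of_apply, ite_and, ite_mul, zero_mul]
    by_cases hip : p = i
    · simp only [hip, if_true]
      rw [Finset.sum_ite_eq]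
      simp [hip]
    · simp [hip]
  simp only [h1, mul_ite, mul_zero]
  rw [Finset.sum_ite_eq]
  simp [sq]
  ring

lemma stdBasis_isHermitian (p : Fin m) (c : ℝ) : (Matrix.single p p c).IsHermitian := by
  ext i j
  simp only [conjTranspose_apply, star_trivial, Matrix.single, transpose_apply]
  by_cases h1 : p = i <;> by_cases h2 : p = j <;> simp [h1, h2, Matrix.single,
    Matrix.of_apply, and_comm]

lemma posDef_add_single {T : Matrix (Fin m) (Fin m) ℝ} (hT : T.PosDef) (p : Fin m) {c : ℝ}
    (hc : 0 ≤ c) : (T + Matrix.single p p c).PosDef := by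
  refine PosDef.of_dotProduct_mulVec_pos (hT.1.add (stdBasis_isHermitian p c)) fun x hx => ?_
  have h1 := hT.dotProduct_mulVec_pos hx
  have h2 : star x ⬝ᵥ (T + Matrix.single p p c) *ᵥ x
      = star x ⬝ᵥ T *ᵥ x + c * (x p)^2 := by
    have := qf_add_single T p c x
    simpa [qf] using this
  rw [h2]
  have : 0 ≤ c * (x p)^2 := mul_nonneg hc (sq_nonneg _)
  linarith

end SqGauss

namespace SqGauss

lemma prune_single {k : ℕ} (hk : 1 ≤ k) (T : Matrix (Fin (k+1)) (Fin (k+1)) ℝ)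
    (hsym : T.IsHermitian)
    (htri : ∀ i j : Fin (k+1), ((i:ℕ)+1 < (j:ℕ) ∨ (j:ℕ)+1 < (i:ℕ)) → T i j = 0)
    (hd : T (Fin.last k) (Fin.last k) ≠ 0) (t : ℝ)
    (hdt : T (Fin.last k) (Fin.last k) + t ≠ 0) :
    prune (T + Matrix.single (Fin.last k) (Fin.last k) t)
      = prune T + Matrix.single (⟨k-1, by omega⟩ : Fin k) (⟨k-1, by omega⟩ : Fin k)
          ((T (Fin.castSucc ⟨k-1, by omega⟩) (Fin.last k))^2 *
            (1/(T (Fin.last k) (Fin.last k)) - 1/(T (Fin.last k) (Fin.last k) + t))) := by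
  set km1 : Fin k := ⟨k-1, by omega⟩ with hkm1
  set d := T (Fin.last k) (Fin.last k) with hdd
  have hstd : ∀ (a b i' j' : Fin (k+1)) (c : ℝ),
      Matrix.single a b c i' j' = if a = i' ∧ b = j' then c else 0 := fun _ _ _ _ _ => rfl
  have hstd' : ∀ (a b i' j' : Fin k) (c : ℝ),
      Matrix.single a b c i' j' = if a = i' ∧ b = j' then c else 0 := fun _ _ _ _ _ => rfl
  funext i j
  have hic : Fin.last k ≠ i.castSucc := (Fin.castSucc_lt_last i).ne'
  have hjc : Fin.last k ≠ j.castSucc := (Fin.castSucc_lt_last j).ne'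
  have e1 : (T + Matrix.single (Fin.last k) (Fin.last k) t) i.castSucc j.castSucc
      = T i.castSucc j.castSucc := by
    rw [Matrix.add_apply, hstd, if_neg (fun h : _ ∧ _ => hic h.1), add_zero]
  have e2 : (T + Matrix.single (Fin.last k) (Fin.last k) t) i.castSucc (Fin.last k)
      = T i.castSucc (Fin.last k) := by
    rw [Matrix.add_apply, hstd, if_neg (fun h : _ ∧ _ => hic h.1), add_zero]
  have e3 : (T + Matrix.single (Fin.last k) (Fin.last k) t) (Fin.last k) j.castSucc
      = T (Fin.last k) j.castSucc := by
    rw [Matrix.add_apply, hstd, if_neg (fun h : _ ∧ _ => hjc h.2), add_zero]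
  have e4 : (T + Matrix.single (Fin.last k) (Fin.last k) t) (Fin.last k) (Fin.last k)
      = d + t := by
    rw [Matrix.add_apply, hstd, if_pos ⟨rfl, rfl⟩, hdd]
  simp only [prune, Matrix.add_apply, e1, e2, e3, e4]
  by_cases hij : km1 = i ∧ km1 = j
  · obtain ⟨hi, hj⟩ := hij
    subst hi; subst hj
    rw [hstd', if_pos ⟨rfl, rfl⟩]
    have hw : T (Fin.last k) km1.castSucc = T km1.castSucc (Fin.last k) := symm_apply hsym _ _
    rw [hw]
    simp only [← hdd]
    field_simp
    ring
  · rw [hstd', if_neg hij]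
    have hzero : T i.castSucc (Fin.last k) * T (Fin.last k) j.castSucc = 0 := by
      rcases not_and_or.mp hij with hi | hj
      · refine mul_eq_zero.mpr (Or.inl (htri _ _ (Or.inl ?_)))
        simp only [Fin.coe_castSucc, Fin.val_last]
        have : (i:ℕ) ≠ k - 1 := fun h => hi (by rw [hkm1]; exact Fin.ext (by simp [h]))
        have := i.isLt
        omega
      · refine mul_eq_zero.mpr (Or.inr (htri _ _ (Or.inr ?_)))
        simp only [Fin.coe_castSucc, Fin.val_last]
        have : (j:ℕ) ≠ k - 1 := fun h => hj (by rw [hkm1]; exact Fin.ext (by simp [h]))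
        have := j.isLt
        omega
    rw [hzero]
    ring

end SqGauss

namespace SqGauss

lemma measurable_expqf {m : ℕ} (T : Matrix (Fin m) (Fin m) ℝ) :
    Measurable fun x => ENNReal.ofReal (Real.exp (-(qf T x)/2)) :=
  ENNReal.measurable_ofReal.comp (Real.measurable_exp.comp ((measurable_qf T).neg.div_const 2))

lemma base_case {k : ℕ} (hk : 1 ≤ k) (T : Matrix (Fin (k+1)) (Fin (k+1)) ℝ) (hT : T.PosDef)
    (htri : ∀ i j : Fin (k+1), ((i:ℕ)+1 < (j:ℕ) ∨ (j:ℕ)+1 < (i:ℕ)) → T i j = 0)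
    (t : ℝ) (ht : 0 ≤ t) :
    ∃ c β : ℝ, 0 < c ∧ c ≤ 1 ∧ 0 ≤ β ∧
      ∀ G : (Fin k → ℝ) → ENNReal, Measurable G →
      ∫⁻ x : Fin (k+1) → ℝ,
          ENNReal.ofReal (Real.exp (-(t * (x (Fin.last k))^2)/2)) * G (fun i => x i.castSucc)
            * ENNReal.ofReal (Real.exp (-(qf T x)/2))
        = ∫⁻ x : Fin (k+1) → ℝ,
          ENNReal.ofReal (c * Real.exp (-(β) * (x ((⟨k-1, by omega⟩ : Fin k).castSucc))^2))
            * G (fun i => x i.castSucc) * ENNReal.ofReal (Real.exp (-(qf T x)/2)) := by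
  set km1 : Fin k := ⟨k-1, by omega⟩ with hkm1
  have hd : 0 < T (Fin.last k) (Fin.last k) := posDef_diag hT _
  set d := T (Fin.last k) (Fin.last k) with hdd
  have hdt : 0 < d + t := by linarith
  set w := T km1.castSucc (Fin.last k) with hww
  set δ := w^2 * (1/d - 1/(d+t)) with hδδ
  have hδ : 0 ≤ δ := by
    apply mul_nonneg (sq_nonneg _)
    have h1 : 1/(d+t) ≤ 1/d := one_div_le_one_div_of_le hd (by linarith)
    linarith
  refine ⟨Real.sqrt (d/(d+t)), δ/2, Real.sqrt_pos.mpr (div_pos hd hdt), ?_, by linarith, ?_⟩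
  · rw [show (1:ℝ) = Real.sqrt 1 by simp]
    apply Real.sqrt_le_sqrt
    rw [div_le_one hdt]; linarith
  intro G hG
  set Tt := T + Matrix.single (Fin.last k) (Fin.last k) t with hTt
  have hTtpd : Tt.PosDef := posDef_add_single hT _ ht
  have hTtll : Tt (Fin.last k) (Fin.last k) = d + t := by
    simp [hTt, Matrix.add_apply, Matrix.single, hdd]
  -- rewrite LHS integrand
  have lhs1 : ∀ x : Fin (k+1) → ℝ,
      ENNReal.ofReal (Real.exp (-(t * (x (Fin.last k))^2)/2)) * G (fun i => x i.castSucc)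
        * ENNReal.ofReal (Real.exp (-(qf T x)/2))
      = G (fun i => x i.castSucc) * ENNReal.ofReal (Real.exp (-(qf Tt x)/2)) := by
    intro x
    have : ENNReal.ofReal (Real.exp (-(t * (x (Fin.last k))^2)/2)) *
        ENNReal.ofReal (Real.exp (-(qf T x)/2)) = ENNReal.ofReal (Real.exp (-(qf Tt x)/2)) := by
      rw [← ENNReal.ofReal_mul (Real.exp_nonneg _), ← Real.exp_add, hTt,
        qf_add_single T (Fin.last k) t x]
      congr 1
      ring
    calc ENNReal.ofReal (Real.exp (-(t * (x (Fin.last k))^2)/2)) * G (fun i => x i.castSucc)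
        * ENNReal.ofReal (Real.exp (-(qf T x)/2))
        = G (fun i => x i.castSucc) * (ENNReal.ofReal (Real.exp (-(t * (x (Fin.last k))^2)/2)) *
            ENNReal.ofReal (Real.exp (-(qf T x)/2))) := by ring
      _ = G (fun i => x i.castSucc) * ENNReal.ofReal (Real.exp (-(qf Tt x)/2)) := by rw [this]
  have hψmeas : Measurable fun u : Fin k → ℝ =>
      ENNReal.ofReal (Real.sqrt (d/(d+t)) * Real.exp (-(δ/2) * (u km1)^2)) :=
    ENNReal.measurable_ofReal.comp ((measurable_const.mul (Real.measurable_exp.comp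
      (by fun_prop))).stronglyMeasurable.measurable)
  have rhs1 : ∀ x : Fin (k+1) → ℝ,
      ENNReal.ofReal (Real.sqrt (d/(d+t)) * Real.exp (-(δ/2) * (x (km1.castSucc))^2))
        * G (fun i => x i.castSucc) * ENNReal.ofReal (Real.exp (-(qf T x)/2))
      = (fun u : Fin k → ℝ => ENNReal.ofReal (Real.sqrt (d/(d+t)) *
          Real.exp (-(δ/2) * (u km1)^2)) * G u) (fun i => x i.castSucc)
        * ENNReal.ofReal (Real.exp (-(qf T x)/2)) := fun x => rfl
  rw [lintegral_congr lhs1, lintegral_congr rhs1,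
    step_lintegral Tt hTtpd G hG,
    step_lintegral T hT (fun u : Fin k → ℝ => ENNReal.ofReal (Real.sqrt (d/(d+t)) *
          Real.exp (-(δ/2) * (u km1)^2)) * G u) (hψmeas.mul hG), hTtll]
  have hprune : qf (prune Tt) = fun u => qf (prune T) u + δ * (u km1)^2 := by
    funext u
    rw [hTt, prune_single hk T hT.1 htri hd.ne' t hdt.ne', hδδ, hww, hkm1]
    exact qf_add_single (prune T) _ _ u
  rw [hprune]
  rw [← lintegral_const_mul _ (hG.fun_mul (by
      exact ENNReal.measurable_ofReal.comp (Real.measurable_exp.comp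
        ((((measurable_qf (prune T)).add (((measurable_pi_apply km1).pow_const 2).const_mul
          δ)).neg).div_const 2)))),
    ← lintegral_const_mul _ ((hψmeas.fun_mul hG).fun_mul (measurable_expqf (prune T)))]
  refine lintegral_congr fun u => ?_
  set a := u km1 with haa
  set q := qf (prune T) u with hqq
  have key : Real.sqrt (2*Real.pi/(d+t)) * Real.exp (-(q + δ * a^2)/2)
      = Real.sqrt (2*Real.pi/d) * (Real.sqrt (d/(d+t)) * Real.exp (-(δ/2) * a^2) *
          Real.exp (-q/2)) := by
    have h1 : Real.exp (-(q + δ * a^2)/2) = Real.exp (-(δ/2) * a^2) * Real.exp (-q/2) := by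
      rw [← Real.exp_add]; congr 1; ring
    have h2 : Real.sqrt (2*Real.pi/(d+t)) = Real.sqrt (2*Real.pi/d) * Real.sqrt (d/(d+t)) := by
      rw [← Real.sqrt_mul (by positivity)]
      congr 1
      field_simp
    rw [h1, h2]; ring
  calc ENNReal.ofReal (Real.sqrt (2*Real.pi/(d+t))) *
        (G u * ENNReal.ofReal (Real.exp (-(q + δ * a^2)/2)))
      = G u * ENNReal.ofReal (Real.sqrt (2*Real.pi/(d+t)) * Real.exp (-(q + δ * a^2)/2)) := by
        rw [ENNReal.ofReal_mul (Real.sqrt_nonneg _)]; ring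
    _ = G u * ENNReal.ofReal (Real.sqrt (2*Real.pi/d) * (Real.sqrt (d/(d+t)) *
          Real.exp (-(δ/2) * a^2) * Real.exp (-q/2))) := by rw [key]
    _ = ENNReal.ofReal (Real.sqrt (2*Real.pi/d)) *
        (ENNReal.ofReal (Real.sqrt (d/(d+t)) * Real.exp (-(δ/2) * a^2)) * G u *
          ENNReal.ofReal (Real.exp (-q/2))) := by
        rw [ENNReal.ofReal_mul (Real.sqrt_nonneg _), ENNReal.ofReal_mul (by positivity)]
        ring

end SqGauss

namespace SqGauss

lemma main_ind {k : ℕ} (hk : 1 ≤ k) :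
    ∀ n (hn : k + 1 ≤ n) (T : Matrix (Fin n) (Fin n) ℝ), T.PosDef →
    (∀ i j : Fin n, ((i:ℕ)+1 < (j:ℕ) ∨ (j:ℕ)+1 < (i:ℕ)) → T i j = 0) →
    ∀ t : ℝ, 0 ≤ t →
    ∃ c β : ℝ, 0 < c ∧ c ≤ 1 ∧ 0 ≤ β ∧
      ∀ G : (Fin k → ℝ) → ENNReal, Measurable G →
      ∫⁻ x : Fin n → ℝ,
          ENNReal.ofReal (Real.exp (-(t * (x ⟨k, by omega⟩)^2)/2)) *
            G (fun i => x ⟨i, lt_of_lt_of_le i.isLt (by omega)⟩) *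
            ENNReal.ofReal (Real.exp (-(qf T x)/2))
        = ∫⁻ x : Fin n → ℝ,
          ENNReal.ofReal (c * Real.exp (-β * (x ⟨k-1, by omega⟩)^2)) *
            G (fun i => x ⟨i, lt_of_lt_of_le i.isLt (by omega)⟩) *
            ENNReal.ofReal (Real.exp (-(qf T x)/2)) := by
  refine Nat.le_induction ?_ ?_
  · intro T hT htri t ht
    obtain ⟨c, β, h1, h2, h3, hmain⟩ := base_case hk T hT htri t ht
    exact ⟨c, β, h1, h2, h3, fun G hG => hmain G hG⟩
  · intro n hn IH T hT htri t ht
    obtain ⟨c, β, h1, h2, h3, hmain⟩ :=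
      IH (prune T) (prune_posDef hT) (prune_tridiag htri) t ht
    refine ⟨c, β, h1, h2, h3, fun G hG => ?_⟩
    have hkn : k < n := by omega
    set h : (Fin n → ℝ) → ENNReal := fun u =>
      ENNReal.ofReal (Real.exp (-(t * (u ⟨k, by omega⟩)^2)/2)) *
        G (fun i => u ⟨i, lt_of_lt_of_le i.isLt (by omega)⟩) with hh_def
    have hh : Measurable h := by
      apply Measurable.mul
      · exact ENNReal.measurable_ofReal.comp (Real.measurable_exp.comp
          (by fun_prop))
      · exact hG.comp (measurable_pi_lambda _ fun i => measurable_pi_apply _)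
    set h' : (Fin n → ℝ) → ENNReal := fun u =>
      ENNReal.ofReal (c * Real.exp (-β * (u ⟨k-1, by omega⟩)^2)) *
        G (fun i => u ⟨i, lt_of_lt_of_le i.isLt (by omega)⟩) with hh'_def
    have hh' : Measurable h' := by
      apply Measurable.mul
      · exact ENNReal.measurable_ofReal.comp ((measurable_const.mul (Real.measurable_exp.comp
          (by fun_prop))).stronglyMeasurable.measurable)
      · exact hG.comp (measurable_pi_lambda _ fun i => measurable_pi_apply _)
    calc ∫⁻ x : Fin (n+1) → ℝ,
          ENNReal.ofReal (Real.exp (-(t * (x ⟨k, by omega⟩)^2)/2)) *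
            G (fun i => x ⟨i, lt_of_lt_of_le i.isLt (by omega)⟩) *
            ENNReal.ofReal (Real.exp (-(qf T x)/2))
        = ENNReal.ofReal (Real.sqrt (2*Real.pi / T (Fin.last n) (Fin.last n))) *
          ∫⁻ u : Fin n → ℝ, h u * ENNReal.ofReal (Real.exp (-(qf (prune T) u)/2)) :=
          step_lintegral T hT h hh
      _ = ENNReal.ofReal (Real.sqrt (2*Real.pi / T (Fin.last n) (Fin.last n))) *
          ∫⁻ u : Fin n → ℝ, h' u * ENNReal.ofReal (Real.exp (-(qf (prune T) u)/2)) :=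
          congrArg _ (hmain G hG)
      _ = ∫⁻ x : Fin (n+1) → ℝ,
          ENNReal.ofReal (c * Real.exp (-β * (x ⟨k-1, by omega⟩)^2)) *
            G (fun i => x ⟨i, lt_of_lt_of_le i.isLt (by omega)⟩) *
            ENNReal.ofReal (Real.exp (-(qf T x)/2)) := (step_lintegral T hT h' hh').symm

end SqGauss

namespace SqGauss

lemma gauss_lintegral {n k : ℕ} (S : Matrix (Fin n) (Fin n) ℝ) (hS : S.PosDef)
    (htri : ∀ i j : Fin n, ((i:ℕ)+1 < (j:ℕ) ∨ (j:ℕ)+1 < (i:ℕ)) → S i j = 0)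
    (hk : 1 ≤ k) (hkn : k < n) (t : ℝ) (ht : 0 ≤ t) :
    ∃ c β : ℝ, 0 < c ∧ c ≤ 1 ∧ 0 ≤ β ∧
      ∀ G : (Fin k → ℝ) → ENNReal, Measurable G →
      ∫⁻ x : Fin n → ℝ, ENNReal.ofReal (Real.exp (-(t * (x ⟨k, hkn⟩)^2)/2)) *
          G (fun i => x ⟨i, i.isLt.trans hkn⟩) ∂(multivariateGaussian S⁻¹)
      = ∫⁻ x : Fin n → ℝ,
          ENNReal.ofReal (c * Real.exp (-β * (x ⟨k-1, lt_of_le_of_lt (Nat.sub_le k 1) hkn⟩)^2)) *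
          G (fun i => x ⟨i, i.isLt.trans hkn⟩) ∂(multivariateGaussian S⁻¹) := by
  have hdet : S.det ≠ 0 := hS.det_pos.ne'
  have hinv : (S⁻¹)⁻¹ = S := Matrix.nonsing_inv_nonsing_inv S (isUnit_iff_ne_zero.mpr hdet)
  set Z : ℝ := (Real.sqrt ((2 * Real.pi) ^ n * (S⁻¹).det))⁻¹ with hZ
  have hZ0 : 0 ≤ Z := by positivity
  have hdens : (fun x : Fin n → ℝ => ENNReal.ofReal (Z * Real.exp (-(x ⬝ᵥ (S⁻¹)⁻¹.mulVec x) / 2)))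
      = fun x => ENNReal.ofReal Z * ENNReal.ofReal (Real.exp (-(qf S x)/2)) := by
    funext x
    rw [hinv, ENNReal.ofReal_mul hZ0]
    rfl
  have hdmeas : Measurable fun x : Fin n → ℝ =>
      ENNReal.ofReal Z * ENNReal.ofReal (Real.exp (-(qf S x)/2)) :=
    (measurable_const.mul (measurable_expqf S))
  obtain ⟨c, β, h1, h2, h3, hmain⟩ := main_ind hk n hkn S hS htri t ht
  refine ⟨c, β, h1, h2, h3, fun G hG => ?_⟩
  have hGm : Measurable fun x : Fin n → ℝ => G (fun i => x ⟨i, i.isLt.trans hkn⟩) :=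
    hG.comp (measurable_pi_lambda _ fun i => measurable_pi_apply _)
  have hA : Measurable fun x : Fin n → ℝ =>
      ENNReal.ofReal (Real.exp (-(t * (x ⟨k, hkn⟩)^2)/2)) :=
    ENNReal.measurable_ofReal.comp (Real.measurable_exp.comp
      (by fun_prop))
  have hB : Measurable fun x : Fin n → ℝ =>
      ENNReal.ofReal (c * Real.exp (-β * (x ⟨k-1, lt_of_le_of_lt (Nat.sub_le k 1) hkn⟩)^2)) :=
    ENNReal.measurable_ofReal.comp ((measurable_const.mul (Real.measurable_exp.comp
      (by fun_prop))).stronglyMeasurable.measurable)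
  rw [_root_.multivariateGaussian, ← hZ, hdens,
    lintegral_withDensity_eq_lintegral_mul _ hdmeas (hA.fun_mul hGm),
    lintegral_withDensity_eq_lintegral_mul _ hdmeas (hB.fun_mul hGm)]
  simp only [Pi.mul_apply]
  have e1 : ∀ x : Fin n → ℝ,
      ENNReal.ofReal Z * ENNReal.ofReal (Real.exp (-(qf S x)/2)) *
        (ENNReal.ofReal (Real.exp (-(t * (x ⟨k, hkn⟩)^2)/2)) *
          G (fun i => x ⟨i, i.isLt.trans hkn⟩))
      = ENNReal.ofReal Z * (ENNReal.ofReal (Real.exp (-(t * (x ⟨k, hkn⟩)^2)/2)) *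
          G (fun i => x ⟨i, i.isLt.trans hkn⟩) * ENNReal.ofReal (Real.exp (-(qf S x)/2))) := by
    intro x; ring
  have e2 : ∀ x : Fin n → ℝ,
      ENNReal.ofReal Z * ENNReal.ofReal (Real.exp (-(qf S x)/2)) *
        (ENNReal.ofReal (c * Real.exp
            (-β * (x ⟨k-1, lt_of_le_of_lt (Nat.sub_le k 1) hkn⟩)^2)) *
          G (fun i => x ⟨i, i.isLt.trans hkn⟩))
      = ENNReal.ofReal Z * (ENNReal.ofReal (c * Real.exp
            (-β * (x ⟨k-1, lt_of_le_of_lt (Nat.sub_le k 1) hkn⟩)^2)) *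
          G (fun i => x ⟨i, i.isLt.trans hkn⟩) * ENNReal.ofReal (Real.exp (-(qf S x)/2))) := by
    intro x; ring
  rw [lintegral_congr e1, lintegral_congr e2,
    lintegral_const_mul _ ((hA.fun_mul hGm).fun_mul (measurable_expqf S)),
    lintegral_const_mul _ ((hB.fun_mul hGm).fun_mul (measurable_expqf S))]
  exact congrArg _ (hmain G hG)

end SqGauss

namespace SqGauss

lemma pair_lintegral {n k : ℕ} (μ : Measure (Fin n → ℝ)) [SFinite μ]
    (hk : 1 ≤ k) (hkn : k < n) (t c β : ℝ) (hc : 0 ≤ c)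
    (hsingle : ∀ G : (Fin k → ℝ) → ENNReal, Measurable G →
      ∫⁻ x : Fin n → ℝ, ENNReal.ofReal (Real.exp (-(t * (x ⟨k, hkn⟩)^2)/2)) *
          G (fun i => x ⟨i, i.isLt.trans hkn⟩) ∂μ
      = ∫⁻ x : Fin n → ℝ,
          ENNReal.ofReal (c * Real.exp (-β * (x ⟨k-1, lt_of_le_of_lt (Nat.sub_le k 1) hkn⟩)^2)) *
          G (fun i => x ⟨i, i.isLt.trans hkn⟩) ∂μ) :
    ∀ H : (Fin k → ℝ) → ENNReal, Measurable H →
      ∫⁻ z : (Fin n → ℝ) × (Fin n → ℝ),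
          ENNReal.ofReal (Real.exp (-(t * (z.1 ⟨k, hkn⟩)^2)/2)) *
          ENNReal.ofReal (Real.exp (-(t * (z.2 ⟨k, hkn⟩)^2)/2)) *
          H (fun i => ((z.1 ⟨i, i.isLt.trans hkn⟩)^2 + (z.2 ⟨i, i.isLt.trans hkn⟩)^2)/2)
          ∂(μ.prod μ)
      = ∫⁻ z : (Fin n → ℝ) × (Fin n → ℝ),
          ENNReal.ofReal (c^2 * Real.exp (-(2*β) *
            (((z.1 ⟨k-1, lt_of_le_of_lt (Nat.sub_le k 1) hkn⟩)^2 +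
              (z.2 ⟨k-1, lt_of_le_of_lt (Nat.sub_le k 1) hkn⟩)^2)/2))) *
          H (fun i => ((z.1 ⟨i, i.isLt.trans hkn⟩)^2 + (z.2 ⟨i, i.isLt.trans hkn⟩)^2)/2)
          ∂(μ.prod μ) := by
  intro H hH
  have hkm1 := lt_of_le_of_lt (Nat.sub_le k 1) hkn
  set kk : Fin n := ⟨k, hkn⟩
  set km : Fin n := ⟨k-1, hkm1⟩
  have hvmeas : Measurable fun z : (Fin n → ℝ) × (Fin n → ℝ) =>
      (fun i : Fin k => ((z.1 ⟨i, i.isLt.trans hkn⟩)^2 + (z.2 ⟨i, i.isLt.trans hkn⟩)^2)/2) :=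
    measurable_pi_lambda _ fun i =>
      ((((measurable_pi_apply _).comp measurable_fst).pow_const 2).add
        (((measurable_pi_apply _).comp measurable_snd).pow_const 2)).div_const 2
  have hAmeas : ∀ p : Fin n, Measurable fun x : Fin n → ℝ =>
      ENNReal.ofReal (Real.exp (-(t * (x p)^2)/2)) := fun p =>
    ENNReal.measurable_ofReal.comp (Real.measurable_exp.comp
      (by fun_prop))
  have hBmeas : ∀ p : Fin n, Measurable fun x : Fin n → ℝ =>
      ENNReal.ofReal (c * Real.exp (-β * (x p)^2)) := fun p =>
    ENNReal.measurable_ofReal.comp ((measurable_const.mul (Real.measurable_exp.comp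
      (by fun_prop))).stronglyMeasurable.measurable)
  set f1 : (Fin n → ℝ) × (Fin n → ℝ) → ENNReal := fun z =>
    ENNReal.ofReal (Real.exp (-(t * (z.1 kk)^2)/2)) *
    ENNReal.ofReal (Real.exp (-(t * (z.2 kk)^2)/2)) *
    H (fun i => ((z.1 ⟨i, i.isLt.trans hkn⟩)^2 + (z.2 ⟨i, i.isLt.trans hkn⟩)^2)/2) with hf1
  set f2 : (Fin n → ℝ) × (Fin n → ℝ) → ENNReal := fun z =>
    ENNReal.ofReal (Real.exp (-(t * (z.1 kk)^2)/2)) *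
    ENNReal.ofReal (c * Real.exp (-β * (z.2 km)^2)) *
    H (fun i => ((z.1 ⟨i, i.isLt.trans hkn⟩)^2 + (z.2 ⟨i, i.isLt.trans hkn⟩)^2)/2) with hf2
  set f3 : (Fin n → ℝ) × (Fin n → ℝ) → ENNReal := fun z =>
    ENNReal.ofReal (c * Real.exp (-β * (z.1 km)^2)) *
    ENNReal.ofReal (c * Real.exp (-β * (z.2 km)^2)) *
    H (fun i => ((z.1 ⟨i, i.isLt.trans hkn⟩)^2 + (z.2 ⟨i, i.isLt.trans hkn⟩)^2)/2) with hf3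
  have hf1m : Measurable f1 :=
    (((hAmeas kk).comp measurable_fst).mul ((hAmeas kk).comp measurable_snd)).mul
      (hH.comp hvmeas)
  have hf2m : Measurable f2 :=
    (((hAmeas kk).comp measurable_fst).mul ((hBmeas km).comp measurable_snd)).mul
      (hH.comp hvmeas)
  have hf3m : Measurable f3 :=
    (((hBmeas km).comp measurable_fst).mul ((hBmeas km).comp measurable_snd)).mul
      (hH.comp hvmeas)
  have step12 : ∀ x : Fin n → ℝ, ∫⁻ y, f1 (x, y) ∂μ = ∫⁻ y, f2 (x, y) ∂μ := by
    intro x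
    set G : (Fin k → ℝ) → ENNReal := fun u =>
      ENNReal.ofReal (Real.exp (-(t * (x kk)^2)/2)) *
      H (fun i => ((x ⟨i, i.isLt.trans hkn⟩)^2 + (u i)^2)/2) with hGdef
    have hGm : Measurable G :=
      measurable_const.mul (hH.comp (measurable_pi_lambda _ fun i =>
        (measurable_const.add ((measurable_pi_apply i).pow_const 2)).div_const 2))
    have e1 : ∀ y : Fin n → ℝ, f1 (x, y) =
        ENNReal.ofReal (Real.exp (-(t * (y ⟨k, hkn⟩)^2)/2)) *
        G (fun i => y ⟨i, i.isLt.trans hkn⟩) := by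
      intro y; rw [hf1, hGdef]; ring
    have e2 : ∀ y : Fin n → ℝ, f2 (x, y) =
        ENNReal.ofReal (c * Real.exp (-β * (y ⟨k-1, lt_of_le_of_lt (Nat.sub_le k 1) hkn⟩)^2)) *
        G (fun i => y ⟨i, i.isLt.trans hkn⟩) := by
      intro y; rw [hf2, hGdef]; ring
    rw [lintegral_congr e1, lintegral_congr e2]
    exact hsingle G hGm
  have step34 : ∀ y : Fin n → ℝ, ∫⁻ x, f2 (x, y) ∂μ = ∫⁻ x, f3 (x, y) ∂μ := by
    intro y
    set G : (Fin k → ℝ) → ENNReal := fun u =>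
      ENNReal.ofReal (c * Real.exp (-β * (y km)^2)) *
      H (fun i => ((u i)^2 + (y ⟨i, i.isLt.trans hkn⟩)^2)/2) with hGdef
    have hGm : Measurable G :=
      measurable_const.mul (hH.comp (measurable_pi_lambda _ fun i =>
        (((measurable_pi_apply i).pow_const 2).add measurable_const).div_const 2))
    have e1 : ∀ x : Fin n → ℝ, f2 (x, y) =
        ENNReal.ofReal (Real.exp (-(t * (x ⟨k, hkn⟩)^2)/2)) *
        G (fun i => x ⟨i, i.isLt.trans hkn⟩) := by
      intro x; rw [hf2, hGdef]; ring
    have e2 : ∀ x : Fin n → ℝ, f3 (x, y) =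
        ENNReal.ofReal (c * Real.exp (-β * (x ⟨k-1, lt_of_le_of_lt (Nat.sub_le k 1) hkn⟩)^2)) *
        G (fun i => x ⟨i, i.isLt.trans hkn⟩) := by
      intro x; rw [hf3, hGdef]; ring
    rw [lintegral_congr e1, lintegral_congr e2]
    exact hsingle G hGm
  have efinal : ∀ z : (Fin n → ℝ) × (Fin n → ℝ), f3 z =
      ENNReal.ofReal (c^2 * Real.exp (-(2*β) * (((z.1 km)^2 + (z.2 km)^2)/2))) *
      H (fun i => ((z.1 ⟨i, i.isLt.trans hkn⟩)^2 + (z.2 ⟨i, i.isLt.trans hkn⟩)^2)/2) := by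
    intro z
    simp only [hf3]
    congr 1
    rw [← ENNReal.ofReal_mul (by positivity)]
    congr 1
    rw [show c * Real.exp (-β * (z.1 km)^2) * (c * Real.exp (-β * (z.2 km)^2))
        = c^2 * (Real.exp (-β * (z.1 km)^2) * Real.exp (-β * (z.2 km)^2)) by ring,
      ← Real.exp_add]
    congr 2
    ring
  calc ∫⁻ z, f1 z ∂(μ.prod μ) = ∫⁻ x, ∫⁻ y, f1 (x, y) ∂μ ∂μ :=
        lintegral_prod _ hf1m.aemeasurable
    _ = ∫⁻ x, ∫⁻ y, f2 (x, y) ∂μ ∂μ := lintegral_congr step12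
    _ = ∫⁻ z, f2 z ∂(μ.prod μ) := (lintegral_prod _ hf2m.aemeasurable).symm
    _ = ∫⁻ y, ∫⁻ x, f2 (x, y) ∂μ ∂μ := lintegral_prod_symm _ hf2m.aemeasurable
    _ = ∫⁻ y, ∫⁻ x, f3 (x, y) ∂μ ∂μ := lintegral_congr step34
    _ = ∫⁻ z, f3 z ∂(μ.prod μ) := (lintegral_prod_symm _ hf3m.aemeasurable).symm
    _ = _ := lintegral_congr efinal

end SqGauss


open SqGauss

/-- Let `S` be symmetric positive definite and tridiagonal, and let
`η, η'` be independent `N(0, S⁻¹)` vectors. With `X k = ½(η k² + η' k²)`, for every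
`1 ≤ k ≤ n − 1` and `t ≥ 0`,
`E[exp (−t X k) | σ(X 0, …, X (k−1))] = E[exp (−t X k) | σ(X (k−1))]` a.s.;
in particular `(X 0, …, X (n−1))` is a Markov chain. -/
theorem squares_of_tridiagonal_gaussian_markov {n : ℕ}
    (S : Matrix (Fin n) (Fin n) ℝ) (hS : S.PosDef)
    (htri : ∀ i j : Fin n, ((i : ℕ) + 1 < (j : ℕ) ∨ (j : ℕ) + 1 < (i : ℕ)) → S i j = 0)
    {Ω : Type*} [MeasurableSpace Ω] (P : Measure Ω) [IsProbabilityMeasure P]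
    (η η' : Ω → Fin n → ℝ) (hη : Measurable η) (hη' : Measurable η')
    (hlawη : Measure.map η P = multivariateGaussian S⁻¹)
    (hlawη' : Measure.map η' P = multivariateGaussian S⁻¹)
    (hindep : IndepFun η η' P)
    (X : Fin n → Ω → ℝ)
    (hX : ∀ k ω, X k ω = ((η ω k) ^ 2 + (η' ω k) ^ 2) / 2) :
    ∀ (k : ℕ) (hk1 : 1 ≤ k) (hk2 : k < n) (t : ℝ), 0 ≤ t →
      P[(fun ω => Real.exp (-t * X ⟨k, hk2⟩ ω)) |
          MeasurableSpace.comap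
            (fun ω => fun i : Fin k => X ⟨(i : ℕ), i.isLt.trans hk2⟩ ω) inferInstance]
        =ᵐ[P]
      P[(fun ω => Real.exp (-t * X ⟨k, hk2⟩ ω)) |
          MeasurableSpace.comap
            (fun ω => X ⟨k - 1, lt_of_le_of_lt (Nat.sub_le k 1) hk2⟩ ω) inferInstance] := by
  intro k hk1 hk2 t ht
  set μ := multivariateGaussian S⁻¹ with hμdef
  have hprob : IsProbabilityMeasure μ := by
    have h := Measure.isProbabilityMeasure_map (f := η) hη.aemeasurable (μ := P)
    rwa [hlawη] at h
  haveI := hprob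
  set kk : Fin n := ⟨k, hk2⟩ with hkkdef
  set km : Fin n := ⟨k - 1, lt_of_le_of_lt (Nat.sub_le k 1) hk2⟩ with hkmdef
  set V : Ω → (Fin k → ℝ) := fun ω => fun i : Fin k => X ⟨(i : ℕ), i.isLt.trans hk2⟩ ω with hVdef
  have hXm : ∀ j : Fin n, Measurable (X j) := by
    intro j
    have hXe : X j = fun ω => ((η ω j)^2 + (η' ω j)^2)/2 := funext fun ω => hX j ω
    rw [hXe]
    exact ((((measurable_pi_apply j).comp hη).pow_const 2).add
      (((measurable_pi_apply j).comp hη').pow_const 2)).div_const 2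
  have hVm : Measurable V := measurable_pi_lambda _ fun i => hXm _
  have hX0 : ∀ j ω, 0 ≤ X j ω := fun j ω => by rw [hX]; positivity
  obtain ⟨c, β, hc0, hc1, hβ0, hsingle⟩ := gauss_lintegral S hS htri hk1 hk2 t ht
  have hpair := pair_lintegral μ hk1 hk2 t c β hc0.le hsingle
  set f : Ω → ℝ := fun ω => Real.exp (-t * X kk ω) with hfdef
  set g : Ω → ℝ := fun ω => c^2 * Real.exp (-(2*β) * X km ω) with hgdef
  have hfm : Measurable f := Real.measurable_exp.comp ((hXm kk).const_mul (-t))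
  have hgm : Measurable g :=
    (Real.measurable_exp.comp ((hXm km).const_mul (-(2*β)))).const_mul (c^2)
  have hf0 : ∀ ω, 0 ≤ f ω := fun ω => (Real.exp_pos _).le
  have hf1 : ∀ ω, f ω ≤ 1 := by
    intro ω
    show Real.exp (-t * X kk ω) ≤ 1
    apply Real.exp_le_one_iff.mpr
    have := hX0 kk ω
    nlinarith
  have hg0 : ∀ ω, 0 ≤ g ω := fun ω => by
    show 0 ≤ c^2 * Real.exp (-(2*β) * X km ω); positivity
  have hg1 : ∀ ω, g ω ≤ 1 := by
    intro ω
    show c^2 * Real.exp (-(2*β) * X km ω) ≤ 1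
    have h1 : Real.exp (-(2*β) * X km ω) ≤ 1 := by
      apply Real.exp_le_one_iff.mpr
      have := hX0 km ω
      nlinarith
    have h2 := (Real.exp_pos (-(2*β) * X km ω)).le
    nlinarith
  have hfi : Integrable f P := by
    refine (integrable_const (1:ℝ)).mono' hfm.aestronglyMeasurable (ae_of_all _ fun ω => ?_)
    rw [Real.norm_eq_abs, abs_of_nonneg (hf0 ω)]
    exact hf1 ω
  have hgi : Integrable g P := by
    refine (integrable_const (1:ℝ)).mono' hgm.aestronglyMeasurable (ae_of_all _ fun ω => ?_)
    rw [Real.norm_eq_abs, abs_of_nonneg (hg0 ω)]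
    exact hg1 ω
  have hjoint : Measure.map (fun ω => (η ω, η' ω)) P = μ.prod μ := by
    have h := (ProbabilityTheory.indepFun_iff_map_prod_eq_prod_map_map
      hη.aemeasurable hη'.aemeasurable).mp hindep
    rw [hlawη, hlawη'] at h
    exact h
  -- the key lintegral identity
  have hkey : ∀ B : Set (Fin k → ℝ), MeasurableSet B →
      ∫⁻ ω, ENNReal.ofReal (f ω) * B.indicator (fun _ => (1:ENNReal)) (V ω) ∂P
      = ∫⁻ ω, ENNReal.ofReal (g ω) * B.indicator (fun _ => (1:ENNReal)) (V ω) ∂P := by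
    intro B hB
    set H : (Fin k → ℝ) → ENNReal := B.indicator (fun _ => 1) with hHdef
    have hHm : Measurable H := measurable_const.indicator hB
    set W : Ω → (Fin n → ℝ) × (Fin n → ℝ) := fun ω => (η ω, η' ω) with hWdef
    have hWm : Measurable W := hη.prodMk hη'
    have hAmeas : ∀ p : Fin n, Measurable fun x : Fin n → ℝ =>
        ENNReal.ofReal (Real.exp (-(t * (x p)^2)/2)) := fun p =>
      ENNReal.measurable_ofReal.comp (Real.measurable_exp.comp
        (by fun_prop))
    have hvmeas : Measurable fun z : (Fin n → ℝ) × (Fin n → ℝ) =>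
        (fun i : Fin k => ((z.1 ⟨i, i.isLt.trans hk2⟩)^2 + (z.2 ⟨i, i.isLt.trans hk2⟩)^2)/2) :=
      measurable_pi_lambda _ fun i =>
        ((((measurable_pi_apply _).comp measurable_fst).pow_const 2).add
          (((measurable_pi_apply _).comp measurable_snd).pow_const 2)).div_const 2
    have hF1m : Measurable fun z : (Fin n → ℝ) × (Fin n → ℝ) =>
        ENNReal.ofReal (Real.exp (-(t * (z.1 kk)^2)/2)) *
        ENNReal.ofReal (Real.exp (-(t * (z.2 kk)^2)/2)) *
        H (fun i => ((z.1 ⟨i, i.isLt.trans hk2⟩)^2 + (z.2 ⟨i, i.isLt.trans hk2⟩)^2)/2) :=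
      (((hAmeas kk).comp measurable_fst).mul ((hAmeas kk).comp measurable_snd)).mul
        (hHm.comp hvmeas)
    have hF3m : Measurable fun z : (Fin n → ℝ) × (Fin n → ℝ) =>
        ENNReal.ofReal (c^2 * Real.exp (-(2*β) * (((z.1 km)^2 + (z.2 km)^2)/2))) *
        H (fun i => ((z.1 ⟨i, i.isLt.trans hk2⟩)^2 + (z.2 ⟨i, i.isLt.trans hk2⟩)^2)/2) := by
      refine Measurable.mul ?_ (hHm.comp hvmeas)
      refine ENNReal.measurable_ofReal.comp ?_
      refine Measurable.const_mul (Real.measurable_exp.comp ?_) _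
      exact (((((measurable_pi_apply km).comp measurable_fst).pow_const 2).add
        (((measurable_pi_apply km).comp measurable_snd).pow_const 2)).div_const 2).const_mul _
    have hlhs : ∀ ω, ENNReal.ofReal (f ω) * H (V ω) =
        ENNReal.ofReal (Real.exp (-(t * ((W ω).1 kk)^2)/2)) *
        ENNReal.ofReal (Real.exp (-(t * ((W ω).2 kk)^2)/2)) *
        H (fun i => (((W ω).1 ⟨i, i.isLt.trans hk2⟩)^2 +
            ((W ω).2 ⟨i, i.isLt.trans hk2⟩)^2)/2) := by
      intro ω
      have hVW : V ω = fun i : Fin k => (((W ω).1 ⟨i, i.isLt.trans hk2⟩)^2 +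
          ((W ω).2 ⟨i, i.isLt.trans hk2⟩)^2)/2 := by
        funext i
        rw [hVdef, hWdef]
        exact hX _ ω
      have hfW : ENNReal.ofReal (f ω) =
          ENNReal.ofReal (Real.exp (-(t * ((W ω).1 kk)^2)/2)) *
          ENNReal.ofReal (Real.exp (-(t * ((W ω).2 kk)^2)/2)) := by
        simp only [hfdef, hWdef]
        rw [← ENNReal.ofReal_mul (Real.exp_nonneg _), ← Real.exp_add]
        congr 1
        rw [hX kk ω]
        ring
      rw [hVW, hfW]
    have hrhs : ∀ ω, ENNReal.ofReal (g ω) * H (V ω) =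
        ENNReal.ofReal (c^2 * Real.exp (-(2*β) * ((((W ω).1 km)^2 + ((W ω).2 km)^2)/2))) *
        H (fun i => (((W ω).1 ⟨i, i.isLt.trans hk2⟩)^2 +
            ((W ω).2 ⟨i, i.isLt.trans hk2⟩)^2)/2) := by
      intro ω
      have hVW : V ω = fun i : Fin k => (((W ω).1 ⟨i, i.isLt.trans hk2⟩)^2 +
          ((W ω).2 ⟨i, i.isLt.trans hk2⟩)^2)/2 := by
        funext i
        rw [hVdef, hWdef]
        exact hX _ ω
      have hgW : g ω = c^2 * Real.exp (-(2*β) * ((((W ω).1 km)^2 + ((W ω).2 km)^2)/2)) := by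
        simp only [hgdef, hWdef]
        rw [hX km ω]
      rw [hVW, hgW]
    calc ∫⁻ ω, ENNReal.ofReal (f ω) * B.indicator (fun _ => (1:ENNReal)) (V ω) ∂P
        = ∫⁻ ω, (fun z : (Fin n → ℝ) × (Fin n → ℝ) =>
            ENNReal.ofReal (Real.exp (-(t * (z.1 kk)^2)/2)) *
            ENNReal.ofReal (Real.exp (-(t * (z.2 kk)^2)/2)) *
            H (fun i => ((z.1 ⟨i, i.isLt.trans hk2⟩)^2 + (z.2 ⟨i, i.isLt.trans hk2⟩)^2)/2))
            (W ω) ∂P := lintegral_congr hlhs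
      _ = ∫⁻ z, (fun z : (Fin n → ℝ) × (Fin n → ℝ) =>
            ENNReal.ofReal (Real.exp (-(t * (z.1 kk)^2)/2)) *
            ENNReal.ofReal (Real.exp (-(t * (z.2 kk)^2)/2)) *
            H (fun i => ((z.1 ⟨i, i.isLt.trans hk2⟩)^2 + (z.2 ⟨i, i.isLt.trans hk2⟩)^2)/2))
            z ∂(μ.prod μ) := by
          rw [← hjoint]
          exact (lintegral_map hF1m hWm).symm
      _ = ∫⁻ z, (fun z : (Fin n → ℝ) × (Fin n → ℝ) =>
            ENNReal.ofReal (c^2 * Real.exp (-(2*β) * (((z.1 km)^2 + (z.2 km)^2)/2))) *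
            H (fun i => ((z.1 ⟨i, i.isLt.trans hk2⟩)^2 + (z.2 ⟨i, i.isLt.trans hk2⟩)^2)/2))
            z ∂(μ.prod μ) := hpair H hHm
      _ = ∫⁻ ω, (fun z : (Fin n → ℝ) × (Fin n → ℝ) =>
            ENNReal.ofReal (c^2 * Real.exp (-(2*β) * (((z.1 km)^2 + (z.2 km)^2)/2))) *
            H (fun i => ((z.1 ⟨i, i.isLt.trans hk2⟩)^2 + (z.2 ⟨i, i.isLt.trans hk2⟩)^2)/2))
            (W ω) ∂P := by
          rw [← hjoint]
          exact lintegral_map hF3m hWm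
      _ = ∫⁻ ω, ENNReal.ofReal (g ω) * B.indicator (fun _ => (1:ENNReal)) (V ω) ∂P :=
          (lintegral_congr hrhs).symm
  -- real set-integral identity
  have hset : ∀ B : Set (Fin k → ℝ), MeasurableSet B →
      ∫ ω in V ⁻¹' B, g ω ∂P = ∫ ω in V ⁻¹' B, f ω ∂P := by
    intro B hB
    have hind : ∀ (h : Ω → ℝ), (∀ ω, 0 ≤ h ω) → Measurable h →
        ∫ ω in V ⁻¹' B, h ω ∂P =
          (∫⁻ ω, ENNReal.ofReal (h ω) * B.indicator (fun _ => (1:ENNReal)) (V ω) ∂P).toReal := by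
      intro h h0 hm
      rw [integral_eq_lintegral_of_nonneg_ae (ae_of_all _ h0) hm.aestronglyMeasurable]
      congr 1
      rw [← lintegral_indicator (hVm hB)]
      refine lintegral_congr fun ω => ?_
      by_cases hω : V ω ∈ B
      · simp [Set.indicator_of_mem, hω, Set.mem_preimage]
      · simp [Set.indicator_of_notMem, hω, Set.mem_preimage]
    rw [hind f hf0 hfm, hind g hg0 hgm, hkey B hB]
  -- σ-algebra facts
  have hFle : MeasurableSpace.comap V inferInstance ≤ ‹MeasurableSpace Ω› := hVm.comap_le
  have hGle : MeasurableSpace.comap (X km) inferInstance ≤ ‹MeasurableSpace Ω› :=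
    (hXm km).comap_le
  have hXkmG : Measurable[MeasurableSpace.comap (X km) inferInstance] (X km) :=
    fun s hs => ⟨s, hs, rfl⟩
  have hGF : MeasurableSpace.comap (X km) inferInstance ≤
      MeasurableSpace.comap V inferInstance := by
    rintro s ⟨B, hB, rfl⟩
    exact ⟨(fun v : Fin k → ℝ => v ⟨k-1, by omega⟩) ⁻¹' B,
      (measurable_pi_apply (⟨k-1, by omega⟩ : Fin k)) hB, rfl⟩
  have hXkmF : Measurable[MeasurableSpace.comap V inferInstance] (X km) :=
    fun s hs => hGF _ (hXkmG hs)
  have hgmeasG : Measurable[MeasurableSpace.comap (X km) inferInstance] g := by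
    rw [hgdef]
    exact (Real.measurable_exp.comp (hXkmG.const_mul (-(2*β)))).const_mul (c^2)
  have hgmeasF : Measurable[MeasurableSpace.comap V inferInstance] g := by
    rw [hgdef]
    exact (Real.measurable_exp.comp (hXkmF.const_mul (-(2*β)))).const_mul (c^2)
  have h1 : g =ᵐ[P] P[f | MeasurableSpace.comap V inferInstance] := by
    refine ae_eq_condExp_of_forall_setIntegral_eq hFle hfi
      (fun s _ _ => hgi.integrableOn) (fun s hs _ => ?_)
      (hgmeasF.stronglyMeasurable.aestronglyMeasurable)
    obtain ⟨B, hB, rfl⟩ := hs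
    exact hset B hB
  have h2 : g =ᵐ[P] P[f | MeasurableSpace.comap (X km) inferInstance] := by
    refine ae_eq_condExp_of_forall_setIntegral_eq hGle hfi
      (fun s _ _ => hgi.integrableOn) (fun s hs _ => ?_)
      (hgmeasG.stronglyMeasurable.aestronglyMeasurable)
    obtain ⟨B, hB, rfl⟩ := hs
    exact hset ((fun v : Fin k → ℝ => v ⟨k-1, by omega⟩) ⁻¹' B)
      ((measurable_pi_apply (⟨k-1, by omega⟩ : Fin k)) hB)
  exact h1.symm.trans h2
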